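/- Let S be a Serre subcategory closed under taking injective hulls and let 0 → E^0 → E^1 → ⋯ be a minimal injective resolution of M. Then H^i_{I,J}(M) ∈ S for all i < t if and only if Γ_{I,J}(E^i) ∈ S for all i < t. -/

import Mathlib

open CategoryTheory

noncomputable section

variable {R : Type} [CommRing R]

/-- `W(I,J)`: primes `p` with `I^t ⊆ J + p` for some `t > 0`. -/
def PairW (I J : Ideal R) : Set (PrimeSpectrum R) :=
  {p | ∃ t : ℕ, 0 < t ∧ I ^ t ≤ J + p.asIdeal}

/-- `W̃(I,J)`: ideals `a` with `I^t ⊆ J + a` for some `t > 0`. -/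
def PairWTilde (I J : Ideal R) : Set (Ideal R) :=
  {a | ∃ t : ℕ, 0 < t ∧ I ^ t ≤ J + a}

lemma PairWTilde.mul_mem {I J a b : Ideal R}
    (ha : a ∈ PairWTilde I J) (hb : b ∈ PairWTilde I J) : a * b ∈ PairWTilde I J := by
  obtain ⟨t1, ht1, hta⟩ := ha
  obtain ⟨t2, ht2, htb⟩ := hb
  refine ⟨t1 + t2, by omega, ?_⟩
  have h1 : (J + a) * (J + b) = J * J + J * b + a * J + a * b := by ring
  calc I ^ (t1 + t2) = I ^ t1 * I ^ t2 := pow_add I t1 t2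
    _ ≤ (J + a) * (J + b) := Ideal.mul_mono hta htb
    _ ≤ J + a * b := by
        rw [h1]
        simp only [Ideal.add_eq_sup]
        exact sup_le (sup_le (sup_le (le_sup_of_le_left Ideal.mul_le_right)
          (le_sup_of_le_left Ideal.mul_le_left)) (le_sup_of_le_left Ideal.mul_le_right))
          le_sup_right

/-- The `(I,J)`-torsion submodule `Γ_{I,J}(M)` (characterized via annihilators). -/
def pairTorsion (I J : Ideal R) (M : Type) [AddCommGroup M] [Module R M] :
    Submodule R M where
  carrier := {x | ∃ a ∈ PairWTilde I J, ∀ r ∈ a, r • x = 0}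
  zero_mem' := ⟨I, ⟨1, one_pos, by rw [pow_one, Ideal.add_eq_sup]; exact le_sup_right⟩,
    fun r _ => smul_zero r⟩
  add_mem' := by
    rintro x y ⟨a, ha, hax⟩ ⟨b, hb, hby⟩
    refine ⟨a * b, PairWTilde.mul_mem ha hb, fun r hr => ?_⟩
    rw [smul_add, hax r (Ideal.mul_le_left hr), hby r (Ideal.mul_le_right hr), add_zero]
  smul_mem' := by
    rintro c x ⟨a, ha, hax⟩
    exact ⟨a, ha, fun r hr => by rw [smul_comm, hax r hr, smul_zero]⟩

/-- The `(I,J)`-torsion functor `Γ_{I,J}`. -/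
def pairTorsionFunctor (I J : Ideal R) : ModuleCat.{0} R ⥤ ModuleCat.{0} R where
  obj M := ModuleCat.of R (pairTorsion I J M)
  map {M N} f := ModuleCat.ofHom <| f.hom.restrict (p := pairTorsion I J M) (q := pairTorsion I J N)
    (fun x hx => by
      obtain ⟨a, ha, h⟩ := hx
      exact ⟨a, ha, fun r hr => by rw [← map_smul, h r hr, map_zero]⟩)
  map_id M := rfl
  map_comp f g := rfl

instance (I J : Ideal R) : (pairTorsionFunctor I J).Additive where
  map_add := rfl

/-- Local cohomology `H^i_{I,J}` with respect to the pair `(I,J)`, as the `i`-th right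
derived functor of `Γ_{I,J}`. -/
def pairLocalCohomology (I J : Ideal R) (i : ℕ) : ModuleCat.{0} R ⥤ ModuleCat.{0} R :=
  (pairTorsionFunctor I J).rightDerived i

/-- Ordinary local cohomology `H^i_a = H^i_{a,0}`. -/
def idealLocalCohomology (a : Ideal R) (i : ℕ) : ModuleCat.{0} R ⥤ ModuleCat.{0} R :=
  pairLocalCohomology a 0 i

/-- `Ext_R^i(N, M)` as an `R`-module. -/
def extGroup (i : ℕ) (N M : ModuleCat.{0} R) : ModuleCat.{0} R :=
  ((Ext R (ModuleCat.{0} R) i).obj (Opposite.op N)).obj M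

/-- A Serre subcategory of the category of `R`-modules, given by a predicate closed
under submodules, quotients and extensions. -/
structure SerreClass (R : Type) [CommRing R] where
  mem : ModuleCat.{0} R → Prop
  mem_of_injective : ∀ {M N : ModuleCat.{0} R} (f : M →ₗ[R] N),
    Function.Injective f → mem N → mem M
  mem_of_surjective : ∀ {M N : ModuleCat.{0} R} (f : M →ₗ[R] N),
    Function.Surjective f → mem M → mem N
  mem_of_exact : ∀ {M N K : ModuleCat.{0} R} (f : M →ₗ[R] N) (g : N →ₗ[R] K),
    Function.Injective f → Function.Surjective g → Function.Exact f g →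
    mem M → mem K → mem N

/-- `M` is `I`-torsion. -/
def IsTorsionWrt (I : Ideal R) (M : Type) [AddCommGroup M] [Module R M] : Prop :=
  ∀ x : M, ∃ n : ℕ, ∀ r ∈ I ^ n, r • x = 0

/-- A Melkersson subcategory with respect to `I`. -/
structure MelkerssonClass (R : Type) [CommRing R] (I : Ideal R) extends SerreClass R where
  mem_of_torsionBy : ∀ (M : ModuleCat.{0} R), IsTorsionWrt I M →
    mem (ModuleCat.of R (Submodule.torsionBySet R M (I : Set R))) → mem M

/-- `M` is an `(I,J)`-torsion module. -/
def IsPairTorsion (I J : Ideal R) (M : Type) [AddCommGroup M] [Module R M] : Prop :=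
  pairTorsion I J M = ⊤

/-- dim_R N ≤ k, via the Krull dimension of the support. -/
def moduleDimLE (R : Type) [CommRing R] (N : Type) [AddCommGroup N] [Module R N]
    (k : ℤ) : Prop :=
  Order.krullDim (Module.support R N) ≤ if k < 0 then ⊥ else ((k.toNat : ℕ∞) : WithBot ℕ∞)


lemma PairWTilde.self_mem (I J : Ideal R) : I ∈ PairWTilde I J :=
  ⟨1, one_pos, by rw [pow_one, Ideal.add_eq_sup]; exact le_sup_right⟩

lemma PairWTilde.pow_mem {I J b : Ideal R} (hb : b ∈ PairWTilde I J) {n : ℕ} (hn : 0 < n) :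
    b ^ n ∈ PairWTilde I J := by
  induction n with
  | zero => omega
  | succ m ih =>
    rcases Nat.eq_zero_or_pos m with hm | hm
    · subst hm; simpa [pow_one] using hb
    · rw [pow_succ]; exact PairWTilde.mul_mem (ih hm) hb

/-- a f.g. submodule of the torsion submodule is annihilated by a single ideal in `W̃`. -/
lemma exists_ann (I J : Ideal R) {E : Type} [AddCommGroup E] [Module R E]
    (N : Submodule R E) (hfg : N.FG) (hN : N ≤ pairTorsion I J E) :
    ∃ b ∈ PairWTilde I J, ∀ r ∈ b, ∀ x ∈ N, r • x = 0 := by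
  refine Submodule.fg_induction
    (motive := fun N _ => N ≤ pairTorsion I J E → ∃ b ∈ PairWTilde I J, ∀ r ∈ b, ∀ x ∈ N, r • x = 0)
    ?_ ?_ N hfg hN
  · intro x hx
    obtain ⟨b, hbW, hb⟩ := hx (Submodule.mem_span_singleton_self x)
    refine ⟨b, hbW, fun r hr y hy => ?_⟩
    obtain ⟨c, rfl⟩ := Submodule.mem_span_singleton.mp hy
    rw [smul_comm, hb r hr, smul_zero]
  · intro N₁ N₂ _ _ ih₁ ih₂ hle
    obtain ⟨b₁, hb₁W, hb₁⟩ := ih₁ (le_trans le_sup_left hle)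
    obtain ⟨b₂, hb₂W, hb₂⟩ := ih₂ (le_trans le_sup_right hle)
    refine ⟨b₁ * b₂, PairWTilde.mul_mem hb₁W hb₂W, fun r hr x hx => ?_⟩
    obtain ⟨x₁, hx₁, x₂, hx₂, rfl⟩ := Submodule.mem_sup.mp hx
    rw [smul_add, hb₁ r (Ideal.mul_le_left hr) x₁ hx₁, hb₂ r (Ideal.mul_le_right hr) x₂ hx₂,
      add_zero]

/-- Over a Noetherian ring, the `(I,J)`-torsion submodule of an injective module is injective. -/
lemma pairTorsion_baer (I J : Ideal R) [IsNoetherianRing R] (E : Type) [AddCommGroup E]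
    [Module R E] (hE : Module.Injective R E) : Module.Baer R (pairTorsion I J E) := by
  intro a g
  set f : ↥a →ₗ[R] E := (pairTorsion I J E).subtype.comp g with hf
  have hrange : LinearMap.range f ≤ pairTorsion I J E := by
    rintro _ ⟨x, rfl⟩; exact (g x).2
  have hfg : (LinearMap.range f).FG := by
    rw [LinearMap.range_eq_map]
    exact Submodule.FG.map f (IsNoetherian.noetherian (⊤ : Submodule R ↥a))
  obtain ⟨b, hbW, hb⟩ := exists_ann I J (LinearMap.range f) hfg hrange
  -- Artin–Rees
  obtain ⟨k, hk⟩ := Ideal.exists_pow_inf_eq_pow_smul b (a : Submodule R R)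
  set c : Ideal R := b ^ (k + 1) with hc
  have hcW : c ∈ PairWTilde I J := PairWTilde.pow_mem hbW (Nat.succ_pos k)
  have hAR : c ⊓ a ≤ b • ((b ^ k • ⊤ ⊓ a : Submodule R R)) := by
    have h1 := hk (k+1) (Nat.le_succ k)
    have h2 : (b ^ (k+1) : Ideal R) • (⊤ : Submodule R R) = c := by
      rw [smul_eq_mul, Ideal.mul_top]
    rw [h2] at h1
    rw [h1]
    simp only [Nat.add_sub_cancel_left, pow_one]
    exact le_rfl
  have hvanish : ∀ z ∈ b • ((b ^ k • ⊤ ⊓ a : Submodule R R)),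
      ∃ hz : z ∈ a, f ⟨z, hz⟩ = 0 := by
    intro z hzmem
    refine Submodule.smul_induction_on hzmem ?_ ?_
    · intro r hr m hm
      have hma : m ∈ a := hm.2
      refine ⟨a.smul_mem r hma, ?_⟩
      have : (⟨r • m, a.smul_mem r hma⟩ : ↥a) = r • ⟨m, hma⟩ := rfl
      rw [this, map_smul]
      exact hb r hr _ ⟨⟨m, hma⟩, rfl⟩
    · rintro x y ⟨hxa, hfx⟩ ⟨hya, hfy⟩
      refine ⟨a.add_mem hxa hya, ?_⟩
      have : (⟨x + y, a.add_mem hxa hya⟩ : ↥a) = ⟨x, hxa⟩ + ⟨y, hya⟩ := rfl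
      rw [this, map_add, hfx, hfy, add_zero]
  have hker : Submodule.comap a.subtype (a ⊓ c) ≤ LinearMap.ker f := by
    rintro ⟨z, hza⟩ hmem
    simp only [Submodule.mem_comap, Submodule.coe_subtype, Submodule.mem_inf] at hmem
    obtain ⟨hz', h0⟩ := hvanish z (hAR ⟨hmem.2, hmem.1⟩)
    simpa [LinearMap.mem_ker, Subtype.ext rfl] using
      (by rw [show (⟨z, hza⟩ : ↥a) = ⟨z, hz'⟩ from rfl]; exact h0 : f ⟨z, hza⟩ = 0)
  -- build the map on `a ⊔ c` killing `c`
  let fbar : (↥a ⧸ Submodule.comap a.subtype (a ⊓ c)) →ₗ[R] E :=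
    Submodule.liftQ _ f hker
  let e := LinearMap.quotientInfEquivSupQuotient a c
  let h : ↥(a ⊔ c) →ₗ[R] E :=
    (fbar.comp e.symm.toLinearMap).comp (Submodule.mkQ _)
  obtain ⟨H, hH⟩ := hE.out (a ⊔ c).subtype (Submodule.injective_subtype _) h
  set x₀ : E := H 1 with hx₀def
  have hHval : ∀ (r : R) (hr : r ∈ a ⊔ c), r • x₀ = h ⟨r, hr⟩ := by
    intro r hr
    have : r • x₀ = H (r • 1) := by rw [map_smul]
    rw [this, smul_eq_mul, mul_one]
    exact hH ⟨r, hr⟩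
  have hc0 : ∀ r ∈ c, r • x₀ = 0 := by
    intro r hr
    rw [hHval r (Submodule.mem_sup_right hr)]
    show fbar (e.symm (Submodule.Quotient.mk ⟨r, Submodule.mem_sup_right hr⟩)) = 0
    have : Submodule.Quotient.mk (p := Submodule.comap (a ⊔ c).subtype c)
        (⟨r, Submodule.mem_sup_right hr⟩ : ↥(a ⊔ c)) = 0 := (Submodule.Quotient.mk_eq_zero _).mpr hr
    rw [this, map_zero]; exact map_zero fbar
  have hx₀T : x₀ ∈ pairTorsion I J E := ⟨c, hcW, hc0⟩
  have ha0 : ∀ (r : R) (hr : r ∈ a), r • x₀ = f ⟨r, hr⟩ := by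
    intro r hr
    rw [hHval r (Submodule.mem_sup_left hr)]
    show fbar (e.symm (Submodule.Quotient.mk ⟨r, Submodule.mem_sup_left hr⟩)) = _
    have hsymm := LinearMap.quotientInfEquivSupQuotient_symm_apply_left a c
      ⟨r, Submodule.mem_sup_left hr⟩ hr
    rw [hsymm]
    exact Submodule.liftQ_apply _ f _
  refine ⟨LinearMap.toSpanSingleton R (pairTorsion I J E) ⟨x₀, hx₀T⟩, fun r hr => ?_⟩
  apply Subtype.ext
  show r • x₀ = (g ⟨r, hr⟩ : E)
  rw [ha0 r hr]
  rfl

lemma pairTorsion_injective_object (I J : Ideal R) [IsNoetherianRing R]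
    (E : ModuleCat.{0} R) [h : CategoryTheory.Injective E] :
    CategoryTheory.Injective (ModuleCat.of R (pairTorsion I J E)) := by
  have h0 : CategoryTheory.Injective (ModuleCat.of R E) :=
    h
  have h1 : Module.Injective R E :=
    Module.injective_module_of_injective_object R E
  have h2 : Module.Injective R (pairTorsion I J E) :=
    (pairTorsion_baer I J E h1).injective
  exact Module.injective_object_of_injective_module R _

namespace SerreClass

variable (S : SerreClass R)

lemma mem_of_iso {A B : ModuleCat.{0} R} (e : A ≅ B) (h : S.mem A) : S.mem B := by
  refine S.mem_of_surjective e.hom.hom (fun b => ⟨e.inv b, ?_⟩) h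
  change (e.inv ≫ e.hom) b = b
  rw [e.inv_hom_id]; rfl

lemma mem_sub {B : ModuleCat.{0} R} (p : Submodule R B) (h : S.mem B) :
    S.mem (ModuleCat.of R p) :=
  S.mem_of_injective (M := ModuleCat.of R p) p.subtype p.injective_subtype h

lemma mem_quot {B : ModuleCat.{0} R} (p : Submodule R B) (h : S.mem B) :
    S.mem (ModuleCat.of R (B ⧸ p)) :=
  S.mem_of_surjective (N := ModuleCat.of R (B ⧸ p)) p.mkQ p.mkQ_surjective h

open CategoryTheory.ShortComplex in
lemma mem_moduleCatHomology {C : ShortComplex (ModuleCat.{0} R)} (h : S.mem C.X₂) :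
    S.mem C.moduleCatLeftHomologyData.H :=
  S.mem_quot (B := ModuleCat.of R (LinearMap.ker C.g.hom))
    (LinearMap.range C.moduleCatToCycles) (S.mem_sub (LinearMap.ker C.g.hom) h)

open CategoryTheory.ShortComplex in
lemma mem_ker_of_homology {C : ShortComplex (ModuleCat.{0} R)} (h1 : S.mem C.X₁)
    (h2 : S.mem C.moduleCatLeftHomologyData.H) : S.mem (ModuleCat.of R (LinearMap.ker C.g.hom)) := by
  set N := LinearMap.range C.moduleCatToCycles with hN
  have hmemN : S.mem (ModuleCat.of R N) :=
    S.mem_of_surjective (M := C.X₁) (N := ModuleCat.of R N)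
      C.moduleCatToCycles.rangeRestrict (LinearMap.surjective_rangeRestrict _) h1
  exact S.mem_of_exact (M := ModuleCat.of R N) (N := ModuleCat.of R (LinearMap.ker C.g.hom))
    (K := C.moduleCatLeftHomologyData.H) N.subtype N.mkQ N.injective_subtype N.mkQ_surjective
    (LinearMap.exact_subtype_mkQ N) hmemN h2

open CategoryTheory.ShortComplex in
lemma mem_ker_of_homology_of_f_eq_zero {C : ShortComplex (ModuleCat.{0} R)} (hf : C.f = 0)
    (h2 : S.mem C.moduleCatLeftHomologyData.H) : S.mem (ModuleCat.of R (LinearMap.ker C.g.hom)) := by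
  refine S.mem_of_injective (M := ModuleCat.of R (LinearMap.ker C.g.hom))
    (N := C.moduleCatLeftHomologyData.H) (LinearMap.range C.moduleCatToCycles).mkQ ?_ h2
  change Function.Injective (LinearMap.range C.moduleCatToCycles).mkQ
  rw [← LinearMap.ker_eq_bot, Submodule.ker_mkQ]
  rw [eq_bot_iff]
  rintro _ ⟨x, rfl⟩
  apply Submodule.mem_bot .. |>.mpr
  apply Subtype.ext
  show C.f x = 0
  rw [hf]; rfl

end SerreClass

/-- for a Serre class closed under injective hulls and a minimal injective
resolution `E^•` of `M`: `H^i_{I,J}(M) ∈ S` for all `i < t` iff `Γ_{I,J}(E^i) ∈ S` for all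
`i < t`. -/
theorem stmt_15 (R : Type) [CommRing R] [IsNoetherianRing R] (I J : Ideal R)
    (M : ModuleCat.{0} R) (S : SerreClass R)
    (Shull : ∀ {A B : ModuleCat.{0} R} (f : A →ₗ[R] B), Injective B →
      Function.Injective f →
      (∀ P : Submodule R B, P ⊓ LinearMap.range f = ⊥ → P = ⊥) →
      S.mem A → S.mem B)
    (E : InjectiveResolution M)
    (hmin : ∀ i : ℕ, ∀ P : Submodule R (E.cocomplex.X i),
      P ⊓ LinearMap.ker (E.cocomplex.d i (i + 1)).hom = ⊥ → P = ⊥)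
    (t : ℤ) :
    (∀ i : ℕ, (i : ℤ) < t → S.mem ((pairLocalCohomology I J i).obj M)) ↔
    (∀ i : ℕ, (i : ℤ) < t →
      S.mem (ModuleCat.of R (pairTorsion I J (E.cocomplex.X i)))) := by
    classical
  set Γ := pairTorsionFunctor I J with hGdef
  set K := (Γ.mapHomologicalComplex (ComplexShape.up ℕ)).obj E.cocomplex with hKdef
  have hprev : ∀ i : ℕ, (ComplexShape.up ℕ).prev i = i - 1 := by
    intro i
    cases i with
    | zero => simp
    | succ n => exact (ComplexShape.up ℕ).prev_eq' (by simp)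
  have hiso : ∀ i : ℕ, ((pairLocalCohomology I J i).obj M) ≅
      (K.sc' (i-1) i (i+1)).moduleCatLeftHomologyData.H := fun i =>
    E.isoRightDerivedObj Γ i ≪≫
      ShortComplex.homologyMapIso (K.isoSc' (i-1) i (i+1) (hprev i) (by simp)) ≪≫
      (K.sc' (i-1) i (i+1)).moduleCatHomologyIso
  constructor
  · intro hH i
    induction i using Nat.strong_induction_on with
    | _ i IH =>
      intro hit
      have hhom : S.mem ((K.sc' (i-1) i (i+1)).moduleCatLeftHomologyData.H) :=
        S.mem_of_iso (hiso i) (hH i hit)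
      have hker : S.mem (ModuleCat.of R (LinearMap.ker (K.sc' (i-1) i (i+1)).g.hom)) := by
        rcases Nat.eq_zero_or_pos i with h0 | hpos
        · subst h0
          exact S.mem_ker_of_homology_of_f_eq_zero (K.shape 0 0 (by simp)) hhom
        · refine S.mem_ker_of_homology ?_ hhom
          exact IH (i-1) (by omega)
            (lt_of_le_of_lt (by exact_mod_cast Nat.sub_le i 1) hit)
      haveI : CategoryTheory.Injective (E.cocomplex.X i) := E.injective i
      refine Shull ((LinearMap.ker (K.sc' (i-1) i (i+1)).g.hom).subtype) ?_
        (Submodule.injective_subtype _) ?_ hker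
      · exact pairTorsion_injective_object I J (E.cocomplex.X i)
      · intro P hP
        erw [Submodule.range_subtype] at hP
        have hmap : Submodule.map (pairTorsion I J (E.cocomplex.X i)).subtype P = ⊥ := by
          apply hmin i
          rw [eq_bot_iff]
          rintro x ⟨hx1, hx2⟩
          obtain ⟨p, hpP, rfl⟩ := hx1
          have hpker : p ∈ LinearMap.ker (K.sc' (i-1) i (i+1)).g.hom := by
            show (K.sc' (i-1) i (i+1)).g p = 0
            apply Subtype.ext
            exact hx2
          have hp0 : p ∈ P ⊓ LinearMap.ker (K.sc' (i-1) i (i+1)).g.hom := ⟨hpP, hpker⟩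
          replace hp0 : p = 0 := (Submodule.mem_bot R).mp (hP.le hp0)
          rw [hp0]
          simp
        have := Submodule.map_injective_of_injective
          (Submodule.injective_subtype (pairTorsion I J (E.cocomplex.X i)))
          (by rw [hmap, Submodule.map_bot] :
            Submodule.map (pairTorsion I J (E.cocomplex.X i)).subtype P =
              Submodule.map (pairTorsion I J (E.cocomplex.X i)).subtype ⊥)
        exact this
  · intro hG i hit
    refine S.mem_of_iso (hiso i).symm ?_
    exact S.mem_moduleCatHomology (C := K.sc' (i-1) i (i+1)) (hG i hit)
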